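/- For integers k ≥ 0 and l, m, the space Q_k^{[l,m]} decomposes as the internal direct sum Q_k^{[l,m]} = ⊕_{r=0}^{k} Q_r^{r+l−k, r+m−k, 0}: the subspaces Q_r^{r+l−k,r+m−k,0} of the real-valued functions on K∞, for r = 0,…,k, are linearly independent (their sum is direct) and their sum equals Q_k^{[l,m]}. -/

import Mathlib

open MeasureTheory

noncomputable section

/-- The infinite pyramid K∞ = [0,1] × [0,1] × [0,∞). -/
def Kinf : Set (ℝ × ℝ × ℝ) :=
  {p | 0 ≤ p.1 ∧ p.1 ≤ 1 ∧ 0 ≤ p.2.1 ∧ p.2.1 ≤ 1 ∧ 0 ≤ p.2.2}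

/-- The k-weighted tensor product polynomial space Q_k^{l,m,n}: the span of
(x,y,z) ↦ x^a y^b z^c / (1+z)^k for 0 ≤ a ≤ l, 0 ≤ b ≤ m, 0 ≤ c ≤ n. -/
def Qspace (k : ℕ) (l m n : ℤ) : Submodule ℝ ((ℝ × ℝ × ℝ) → ℝ) :=
  Submodule.span ℝ {f | ∃ a b c : ℕ, (a : ℤ) ≤ l ∧ (b : ℤ) ≤ m ∧ (c : ℤ) ≤ n ∧
    f = fun p => p.1 ^ a * p.2.1 ^ b * p.2.2 ^ c / (1 + p.2.2) ^ k}

/-- The space Q_k^{[l,m]}: the span of (x,y,z) ↦ x^a y^b/(1+z)^c for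
0 ≤ c ≤ k, 0 ≤ a ≤ c+l−k, 0 ≤ b ≤ c+m−k. -/
def QB (k : ℕ) (l m : ℤ) : Submodule ℝ ((ℝ × ℝ × ℝ) → ℝ) :=
  Submodule.span ℝ {f | ∃ a b c : ℕ, c ≤ k ∧ (a : ℤ) ≤ c + l - k ∧ (b : ℤ) ≤ c + m - k ∧
    f = fun p => p.1 ^ a * p.2.1 ^ b / (1 + p.2.2) ^ c}

namespace Stmt11Aux


def vfun (q : ℕ × ℕ × ℕ) : (ℝ × ℝ × ℝ) → ℝ :=
  fun p => p.1 ^ q.1 * p.2.1 ^ q.2.1 / (1 + p.2.2) ^ q.2.2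

def wfun (q : ℕ × ℕ × ℕ) : (ℝ × ℝ × ℝ) → ℝ :=
  fun p => p.1 ^ q.1 * p.2.1 ^ q.2.1 * p.2.2 ^ q.2.2

def coords : Fin 3 → ((ℝ × ℝ × ℝ) → ℝ) :=
  ![fun p => p.1, fun p => p.2.1, fun p => p.2.2]

def E : MvPolynomial (Fin 3) ℝ →ₐ[ℝ] ((ℝ × ℝ × ℝ) → ℝ) := MvPolynomial.aeval coords

lemma E_apply (p : MvPolynomial (Fin 3) ℝ) (q : ℝ × ℝ × ℝ) :
    E p q = MvPolynomial.eval (fun i => coords i q) p := by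
  have h := MvPolynomial.comp_aeval_apply (R := ℝ) (f := coords)
    (Pi.evalAlgHom ℝ (fun _ : ℝ × ℝ × ℝ => ℝ) q) p
  rw [← MvPolynomial.coe_aeval_eq_eval]
  exact h

lemma E_injective : Function.Injective E := by
  intro p q h
  apply MvPolynomial.funext
  intro x
  have h2 := congrFun h (x 0, x 1, x 2)
  rw [E_apply, E_apply] at h2
  have hx : (fun i => coords i (x 0, x 1, x 2)) = x := by
    funext i; fin_cases i <;> simp [coords]
  rwa [hx] at h2

def emb (q : ℕ × ℕ × ℕ) : Fin 3 →₀ ℕ :=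
  Finsupp.single 0 q.1 + Finsupp.single 1 q.2.1 + Finsupp.single 2 q.2.2

lemma emb_apply0 (q : ℕ × ℕ × ℕ) : emb q 0 = q.1 := by
  simp [emb, Finsupp.single_apply]
lemma emb_apply1 (q : ℕ × ℕ × ℕ) : emb q 1 = q.2.1 := by
  simp [emb, Finsupp.single_apply]
lemma emb_apply2 (q : ℕ × ℕ × ℕ) : emb q 2 = q.2.2 := by
  simp [emb, Finsupp.single_apply]

lemma emb_injective : Function.Injective emb := by
  intro q q' h
  have h0 := congrArg (fun f => f 0) h
  have h1 := congrArg (fun f => f 1) h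
  have h2 := congrArg (fun f => f 2) h
  simp only [emb_apply0, emb_apply1, emb_apply2] at h0 h1 h2
  exact Prod.ext h0 (Prod.ext h1 h2)

lemma monomial_emb (q : ℕ × ℕ × ℕ) :
    MvPolynomial.monomial (emb q) (1 : ℝ) =
      MvPolynomial.X 0 ^ q.1 * MvPolynomial.X 1 ^ q.2.1 * MvPolynomial.X 2 ^ q.2.2 := by
  simp [emb, MvPolynomial.X_pow_eq_monomial, MvPolynomial.monomial_mul]

lemma li_w : LinearIndependent ℝ wfun := by
  have li : LinearIndependent ℝ (fun q : ℕ × ℕ × ℕ =>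
      MvPolynomial.monomial (emb q) (1 : ℝ)) := by
    have h := ((MvPolynomial.basisMonomials (Fin 3) ℝ).linearIndependent).comp emb emb_injective
    rw [MvPolynomial.coe_basisMonomials] at h
    exact h
  have li2 := li.map' E.toLinearMap (LinearMap.ker_eq_bot.mpr E_injective)
  have hw : (⇑E.toLinearMap ∘ fun q => MvPolynomial.monomial (emb q) (1 : ℝ)) = wfun := by
    funext q
    funext pt
    rw [Function.comp_apply, AlgHom.toLinearMap_apply, monomial_emb]
    simp only [map_mul, map_pow, E, MvPolynomial.aeval_X]
    simp [coords, wfun]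
  rwa [hw] at li2

def gmap : (ℝ × ℝ × ℝ) → (ℝ × ℝ × ℝ) := fun p => (p.1, p.2.1, p.2.2⁻¹ - 1)

lemma li_v : LinearIndependent ℝ vfun := by
  have key : (LinearMap.funLeft ℝ ℝ gmap) ∘ vfun = wfun := by
    funext q pt
    simp only [Function.comp_apply, LinearMap.funLeft_apply, vfun, wfun, gmap]
    have h1 : (1 : ℝ) + (pt.2.2⁻¹ - 1) = pt.2.2⁻¹ := by ring
    rw [h1, inv_pow, div_inv_eq_mul]
  exact LinearIndependent.of_comp _ (key ▸ li_w)


def Sset (k : ℕ) (l m : ℤ) (r : ℕ) : Set (ℕ × ℕ × ℕ) :=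
  {q | (q.1 : ℤ) ≤ (r : ℤ) + l - k ∧ (q.2.1 : ℤ) ≤ (r : ℤ) + m - k ∧ q.2.2 = r}

lemma Qspace_eq (k : ℕ) (l m : ℤ) (r : ℕ) :
    Qspace r ((r : ℤ) + l - k) ((r : ℤ) + m - k) 0 =
      Submodule.span ℝ (vfun '' Sset k l m r) := by
  unfold Qspace
  congr 1
  ext f
  constructor
  · rintro ⟨a, b, c, ha, hb, hc, rfl⟩
    have hc0 : c = 0 := by exact_mod_cast le_antisymm hc (by positivity)
    subst hc0
    exact ⟨(a, b, r), ⟨ha, hb, rfl⟩, by funext p; simp [vfun]⟩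
  · rintro ⟨⟨a, b, c⟩, ⟨ha, hb, hc⟩, rfl⟩
    refine ⟨a, b, 0, ha, hb, le_refl 0, ?_⟩
    subst hc
    funext p; simp [vfun]

def Tset (k : ℕ) (l m : ℤ) : Set (ℕ × ℕ × ℕ) :=
  {q | (q.1 : ℤ) ≤ (q.2.2 : ℤ) + l - k ∧ (q.2.1 : ℤ) ≤ (q.2.2 : ℤ) + m - k ∧ q.2.2 ≤ k}

lemma QB_eq (k : ℕ) (l m : ℤ) :
    QB k l m = Submodule.span ℝ (vfun '' Tset k l m) := by
  unfold QB
  congr 1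
  ext f
  constructor
  · rintro ⟨a, b, c, hc, ha, hb, rfl⟩
    exact ⟨(a, b, c), ⟨ha, hb, hc⟩, rfl⟩
  · rintro ⟨⟨a, b, c⟩, ⟨ha, hb, hc⟩, rfl⟩
    exact ⟨a, b, c, hc, ha, hb, rfl⟩

lemma Tset_eq (k : ℕ) (l m : ℤ) :
    Tset k l m = ⋃ r : Fin (k + 1), Sset k l m (r : ℕ) := by
  ext ⟨a, b, c⟩
  simp only [Tset, Sset, Set.mem_setOf_eq, Set.mem_iUnion]
  constructor
  · rintro ⟨ha, hb, hc⟩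
    exact ⟨⟨c, by omega⟩, ha, hb, rfl⟩
  · rintro ⟨r, ha, hb, hc⟩
    subst hc
    exact ⟨ha, hb, by omega⟩

end Stmt11Aux

open Stmt11Aux in
theorem stmt_11 (k : ℕ) (l m : ℤ) :
    iSupIndep
      (fun r : Fin (k + 1) =>
        Qspace (r : ℕ) (((r : ℕ) : ℤ) + l - k) (((r : ℕ) : ℤ) + m - k) 0) ∧
    (⨆ r : Fin (k + 1),
        Qspace (r : ℕ) (((r : ℕ) : ℤ) + l - k) (((r : ℕ) : ℤ) + m - k) 0) = QB k l m := by
  constructor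
  · intro i
    simp only []
    rw [Qspace_eq]
    have hsup : (⨆ (j : Fin (k + 1)) (_ : j ≠ i),
        Qspace (j : ℕ) (((j : ℕ) : ℤ) + l - k) (((j : ℕ) : ℤ) + m - k) 0) =
        Submodule.span ℝ (vfun '' ⋃ (j : Fin (k + 1)) (_ : j ≠ i), Sset k l m (j : ℕ)) := by
      simp_rw [Qspace_eq, Set.image_iUnion, Submodule.span_iUnion]
    rw [hsup]
    apply li_v.disjoint_span_image
    rw [Set.disjoint_left]
    rintro ⟨a, b, c⟩ hqi hqj
    simp only [Set.mem_iUnion] at hqj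
    obtain ⟨j, hji, hj⟩ := hqj
    have h1 : c = (i : ℕ) := hqi.2.2
    have h2 : c = (j : ℕ) := hj.2.2
    exact hji (Fin.val_injective (h1 ▸ h2).symm)
  · simp_rw [Qspace_eq, QB_eq, Tset_eq, Set.image_iUnion, Submodule.span_iUnion]
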